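/- Fix an integer k ≥ 1 and let φ(s) = H_k'(H_k^{-1}(s)) H_k^{-1}(s) for 0 < s < 1. Then lim_{a→0+} [ sup_{0 ≤ h ≤ a} sup_{0 ≤ s ≤ 1−h} |φ(s+h) − φ(s)| ] / (a log(1/a)) = 1. -/

import Mathlib

open Real MeasureTheory Filter Set
open Topology

/-- CDF of the Gamma(k,1) distribution with integer shape `k ≥ 1`. -/
noncomputable def Hgamma (k : ℕ) (x : ℝ) : ℝ :=
  ∫ t in (0:ℝ)..x, t ^ (k - 1) * Real.exp (-t) / (Nat.factorial (k - 1) : ℝ)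

/-- Density of the Gamma(k,1) distribution. -/
noncomputable def Hpdf (k : ℕ) (x : ℝ) : ℝ :=
  x ^ (k - 1) * Real.exp (-x) / (Nat.factorial (k - 1) : ℝ)

/-- partial exponential sum -/
noncomputable def Sexp (k : ℕ) (x : ℝ) : ℝ :=
  ∑ j ∈ Finset.range k, x ^ j / (Nat.factorial j : ℝ)

noncomputable def psi (k : ℕ) (x : ℝ) : ℝ :=
  x ^ k * Real.exp (-x) / (Nat.factorial (k - 1) : ℝ)

lemma hasDerivAt_expS (k : ℕ) (hk : 1 ≤ k) (x : ℝ) :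
    HasDerivAt (fun t => Real.exp (-t) * Sexp k t) (-(Hpdf k x)) x := by
  induction k with
  | zero => omega
  | succ n ih =>
    rcases Nat.eq_or_lt_of_le hk with h1 | h1
    · -- n = 0
      have hn : n = 0 := by omega
      subst hn
      have : (fun t => Real.exp (-t) * Sexp 1 t) = fun t => Real.exp (-t) := by
        funext t; simp [Sexp]
      rw [this]
      have h := (Real.hasDerivAt_exp (-x)).comp x (hasDerivAt_neg x)
      refine h.congr_deriv ?_
      simp [Hpdf]
    · have hn : 1 ≤ n := by omega
      have ihn := ih hn
      have hsplit : (fun t => Real.exp (-t) * Sexp (n+1) t)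
          = fun t => Real.exp (-t) * Sexp n t + Real.exp (-t) * (t ^ n / (Nat.factorial n : ℝ)) := by
        funext t
        simp [Sexp, Finset.sum_range_succ, mul_add]
      rw [hsplit]
      have hterm : HasDerivAt (fun t : ℝ => Real.exp (-t) * (t ^ n / (Nat.factorial n : ℝ)))
          (-(Real.exp (-x)) * (x ^ n / (Nat.factorial n : ℝ))
            + Real.exp (-x) * ((n : ℝ) * x ^ (n-1) / (Nat.factorial n : ℝ))) x := by
        have h1 : HasDerivAt (fun t : ℝ => Real.exp (-t)) (-(Real.exp (-x))) x := by
          have h := (Real.hasDerivAt_exp (-x)).comp x (hasDerivAt_neg x)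
          refine h.congr_deriv ?_; ring
        have h2 : HasDerivAt (fun t : ℝ => t ^ n / (Nat.factorial n : ℝ))
            ((n : ℝ) * x ^ (n-1) / (Nat.factorial n : ℝ)) x := by
          exact (hasDerivAt_pow n x).div_const _
        exact h1.mul h2
      have := ihn.add hterm
      refine this.congr_deriv ?_
      have hfac : (Nat.factorial n : ℝ) = (n : ℝ) * (Nat.factorial (n-1) : ℝ) := by
        obtain ⟨m, rfl⟩ := Nat.exists_eq_succ_of_ne_zero (by omega : n ≠ 0)
        simp [Nat.factorial_succ]
      have hnne : (n : ℝ) ≠ 0 := by positivity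
      have hfacne : (Nat.factorial (n-1) : ℝ) ≠ 0 := by
        exact_mod_cast Nat.factorial_ne_zero _
      simp only [Hpdf, Nat.add_sub_cancel]
      rw [hfac]
      field_simp
      ring

noncomputable def Hcl (k : ℕ) (x : ℝ) : ℝ := 1 - Real.exp (-x) * Sexp k x

lemma hasDerivAt_Hcl (k : ℕ) (hk : 1 ≤ k) (x : ℝ) :
    HasDerivAt (Hcl k) (Hpdf k x) x := by
  have h := (hasDerivAt_expS k hk x).const_sub 1
  exact h.congr_deriv (neg_neg _)

lemma continuous_Hpdf (k : ℕ) : Continuous (Hpdf k) := by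
  unfold Hpdf
  continuity

lemma Hgamma_eq (k : ℕ) (hk : 1 ≤ k) (x : ℝ) : Hgamma k x = Hcl k x := by
  have h : Hgamma k x = Hcl k x - Hcl k 0 := by
    have h0 : Hgamma k x = ∫ t in (0:ℝ)..x, Hpdf k t := rfl
    rw [h0, intervalIntegral.integral_eq_sub_of_hasDerivAt
      (fun t _ => hasDerivAt_Hcl k hk t)
      ((continuous_Hpdf k).intervalIntegrable 0 x)]
  rw [h]
  have h0 : Hcl k 0 = 0 := by
    unfold Hcl Sexp
    obtain ⟨m, rfl⟩ := Nat.exists_eq_succ_of_ne_zero (by omega : k ≠ 0)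
    rw [Finset.sum_range_succ']
    simp
  rw [h0, sub_zero]

lemma Sexp_pos (k : ℕ) (hk : 1 ≤ k) (x : ℝ) (hx : 0 ≤ x) : 0 < Sexp k x := by
  unfold Sexp
  obtain ⟨m, rfl⟩ := Nat.exists_eq_succ_of_ne_zero (by omega : k ≠ 0)
  rw [Finset.sum_range_succ']
  have : ∀ i ∈ Finset.range m, (0:ℝ) ≤ x ^ (i+1) / (Nat.factorial (i+1) : ℝ) := by
    intro i _; positivity
  have hs := Finset.sum_nonneg this
  simp only [pow_zero, Nat.factorial_zero, Nat.cast_one, div_one]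
  linarith

lemma Hcl_lt_one (k : ℕ) (hk : 1 ≤ k) (x : ℝ) (hx : 0 ≤ x) : Hcl k x < 1 := by
  unfold Hcl
  have := Sexp_pos k hk x hx
  have he : 0 < Real.exp (-x) := Real.exp_pos _
  nlinarith

lemma one_sub_Hcl (k : ℕ) (x : ℝ) : 1 - Hcl k x = Real.exp (-x) * Sexp k x := by
  unfold Hcl; ring

lemma Hpdf_nonneg (k : ℕ) (x : ℝ) (hx : 0 ≤ x) : 0 ≤ Hpdf k x := by
  unfold Hpdf; positivity

lemma Hpdf_pos (k : ℕ) (x : ℝ) (hx : 0 < x) : 0 < Hpdf k x := by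
  unfold Hpdf
  have : (0:ℝ) < (Nat.factorial (k-1) : ℝ) := by exact_mod_cast Nat.factorial_pos _
  positivity

lemma psi_nonneg (k : ℕ) (x : ℝ) (hx : 0 ≤ x) : 0 ≤ psi k x := by
  unfold psi; positivity

lemma psi_zero (k : ℕ) (hk : 1 ≤ k) : psi k 0 = 0 := by
  unfold psi
  rw [zero_pow (by omega : k ≠ 0), zero_mul, zero_div]

lemma psi_eq (k : ℕ) (hk : 1 ≤ k) (x : ℝ) : psi k x = Hpdf k x * x := by
  unfold psi Hpdf
  obtain ⟨m, rfl⟩ := Nat.exists_eq_succ_of_ne_zero (by omega : k ≠ 0)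
  simp only [Nat.succ_sub_one]
  rw [pow_succ]
  ring

lemma hasDerivAt_psi (k : ℕ) (hk : 1 ≤ k) (x : ℝ) :
    HasDerivAt (psi k) (((k:ℝ) - x) * Hpdf k x) x := by
  have h1 : HasDerivAt (fun t : ℝ => Real.exp (-t)) (-(Real.exp (-x))) x := by
    have h := (Real.hasDerivAt_exp (-x)).comp x (hasDerivAt_neg x)
    refine h.congr_deriv ?_; ring
  have h2 := ((hasDerivAt_pow k x).mul h1).div_const (Nat.factorial (k-1) : ℝ)
  have : (fun t : ℝ => t ^ k * Real.exp (-t) / (Nat.factorial (k-1) : ℝ)) = psi k := rfl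
  replace h2 : HasDerivAt (psi k) _ x := h2
  refine h2.congr_deriv ?_
  unfold Hpdf
  obtain ⟨m, rfl⟩ := Nat.exists_eq_succ_of_ne_zero (by omega : k ≠ 0)
  simp only [Nat.succ_sub_one]
  rw [pow_succ]
  push_cast
  ring

/-- the function psi + c * Hcl, used for all monotonicity arguments -/
lemma hasDerivAt_psi_add (k : ℕ) (hk : 1 ≤ k) (c x : ℝ) :
    HasDerivAt (fun t => psi k t + c * Hcl k t) (((k:ℝ) - x + c) * Hpdf k x) x := by
  have h := (hasDerivAt_psi k hk x).add ((hasDerivAt_Hcl k hk x).const_mul c)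
  refine h.congr_deriv ?_
  ring

lemma continuous_G (k : ℕ) (hk : 1 ≤ k) (c : ℝ) :
    Continuous (fun t => psi k t + c * Hcl k t) :=
  continuous_iff_continuousAt.2 fun x => (hasDerivAt_psi_add k hk c x).continuousAt

lemma mono_psi_add (k : ℕ) (hk : 1 ≤ k) (c : ℝ) :
    MonotoneOn (fun t => psi k t + c * Hcl k t) (Icc 0 ((k:ℝ)+c)) := by
  apply monotoneOn_of_hasDerivWithinAt_nonneg (convex_Icc _ _)
    ((continuous_G k hk c).continuousOn)
    (fun x _ => (hasDerivAt_psi_add k hk c x).hasDerivWithinAt)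
  intro x hx
  rw [interior_Icc] at hx
  have h1 := Hpdf_nonneg k x (le_of_lt hx.1)
  have h2 : 0 ≤ (k:ℝ) - x + c := by have := hx.2; linarith
  exact mul_nonneg h2 h1

lemma anti_psi (k : ℕ) (hk : 1 ≤ k) :
    AntitoneOn (psi k) (Ici (k:ℝ)) := by
  apply antitoneOn_of_hasDerivWithinAt_nonpos (convex_Ici _)
    (continuous_iff_continuousAt.2 fun x => (hasDerivAt_psi k hk x).continuousAt).continuousOn
    (fun x _ => (hasDerivAt_psi k hk x).hasDerivWithinAt)
  intro x hx
  rw [interior_Ici] at hx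
  have hx0 : (0:ℝ) ≤ x := by
    have : (1:ℝ) ≤ (k:ℝ) := by exact_mod_cast hk
    linarith [(mem_Ioi.1 hx).le]
  have h1 := Hpdf_nonneg k x hx0
  have h2 : (k:ℝ) - x ≤ 0 := by linarith [(mem_Ioi.1 hx).le]
  exact mul_nonpos_of_nonpos_of_nonneg h2 h1

lemma anti_W (k : ℕ) (hk : 1 ≤ k) :
    AntitoneOn (fun t => psi k t + (-(k:ℝ)) * Hcl k t) (Ici (0:ℝ)) := by
  apply antitoneOn_of_hasDerivWithinAt_nonpos (convex_Ici _)
    ((continuous_G k hk _).continuousOn)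
    (fun x _ => (hasDerivAt_psi_add k hk _ x).hasDerivWithinAt)
  intro x hx
  rw [interior_Ici] at hx
  have h1 := Hpdf_nonneg k x hx.le
  have h2 : (k:ℝ) - x + -(k:ℝ) ≤ 0 := by linarith [(mem_Ioi.1 hx).le]
  exact mul_nonpos_of_nonpos_of_nonneg h2 h1

lemma strictMono_Hcl (k : ℕ) (hk : 1 ≤ k) :
    StrictMonoOn (Hcl k) (Ici (0:ℝ)) := by
  apply strictMonoOn_of_hasDerivWithinAt_pos (convex_Ici _)
    (continuous_iff_continuousAt.2 fun x => (hasDerivAt_Hcl k hk x).continuousAt).continuousOn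
    (fun x _ => (hasDerivAt_Hcl k hk x).hasDerivWithinAt)
  intro x hx
  rw [interior_Ici] at hx
  exact Hpdf_pos k x hx

/-- key upper bound: psi y - psi x ≤ k * (Hcl y - Hcl x) for 0 ≤ x ≤ y -/
lemma psi_diff_le (k : ℕ) (hk : 1 ≤ k) (x y : ℝ) (hx : 0 ≤ x) (hxy : x ≤ y) :
    psi k y - psi k x ≤ (k:ℝ) * (Hcl k y - Hcl k x) := by
  have := anti_W k hk (mem_Ici.2 hx) (mem_Ici.2 (hx.trans hxy)) hxy
  simp only at this
  nlinarith [this]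

/-- algebra: (z - k) * Sexp k z ≤ z^k / (k-1)! -/
lemma alg_ineq (k : ℕ) (hk : 1 ≤ k) (z : ℝ) (hz : 0 ≤ z) :
    (z - (k:ℝ)) * Sexp k z ≤ z ^ k / (Nat.factorial (k-1) : ℝ) := by
  induction k with
  | zero => omega
  | succ n ih =>
    rcases Nat.eq_or_lt_of_le hk with h1 | h1
    · have hn : n = 0 := by omega
      subst hn
      simp [Sexp]
    · have hn : 1 ≤ n := by omega
      have ihn := ih hn
      have hS : Sexp (n+1) z = Sexp n z + z^n / (Nat.factorial n : ℝ) := by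
        unfold Sexp; rw [Finset.sum_range_succ]
      have hSpos : 0 < Sexp n z := Sexp_pos n hn z hz
      have hfac : (Nat.factorial n : ℝ) = (n : ℝ) * (Nat.factorial (n-1) : ℝ) := by
        obtain ⟨m, rfl⟩ := Nat.exists_eq_succ_of_ne_zero (by omega : n ≠ 0)
        simp [Nat.factorial_succ]
      have hfacpos : (0:ℝ) < (Nat.factorial (n-1) : ℝ) := by
        exact_mod_cast Nat.factorial_pos _
      have hnpos : (0:ℝ) < (n:ℝ) := by exact_mod_cast hn
      have hzn : (0:ℝ) ≤ z^n := by positivity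
      -- from ihn : (z - n) * Sexp n z ≤ z^n / (n-1)! = n * z^n / n!
      have key : z * Sexp n z ≤ (n:ℝ) * (z^n / (Nat.factorial n : ℝ)) + (n:ℝ) * Sexp n z := by
        have : z ^ n / (Nat.factorial (n-1) : ℝ) = (n:ℝ) * (z^n / (Nat.factorial n : ℝ)) := by
          rw [hfac]; field_simp
        nlinarith [ihn]
      have hzn1 : z ^ (n+1) = z * z^n := by rw [pow_succ]; ring
      simp only [Nat.succ_sub_one, hS, hzn1]
      have hfn : (0:ℝ) < (Nat.factorial n : ℝ) := by exact_mod_cast Nat.factorial_pos _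
      -- goal : (z - (n+1)) * (Sexp n z + z^n/n!) ≤ z * z^n / n!
      push_cast
      have hq0 : (0:ℝ) ≤ z^n / (Nat.factorial n : ℝ) := div_nonneg hzn hfn.le
      have expand : (z - ((n:ℝ)+1)) * (Sexp n z + z^n/(Nat.factorial n : ℝ))
          = z * Sexp n z + z * z^n/(Nat.factorial n : ℝ) - ((n:ℝ)+1) * Sexp n z
            - ((n:ℝ)+1) * (z^n/(Nat.factorial n : ℝ)) := by ring
      rw [expand]
      linarith [key, hSpos, hq0]

/-- tail inequality: (z - k) * (1 - Hcl k z) ≤ psi k z for z ≥ 0 -/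
lemma tail_ineq (k : ℕ) (hk : 1 ≤ k) (z : ℝ) (hz : 0 ≤ z) :
    (z - (k:ℝ)) * (1 - Hcl k z) ≤ psi k z := by
  rw [one_sub_Hcl]
  unfold psi
  have h := alg_ineq k hk z hz
  have he : 0 < Real.exp (-z) := Real.exp_pos _
  calc (z - (k:ℝ)) * (Real.exp (-z) * Sexp k z)
      = ((z - (k:ℝ)) * Sexp k z) * Real.exp (-z) := by ring
    _ ≤ (z ^ k / (Nat.factorial (k-1) : ℝ)) * Real.exp (-z) := by
        exact mul_le_mul_of_nonneg_right h he.le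
    _ = z ^ k * Real.exp (-z) / (Nat.factorial (k-1) : ℝ) := by ring

/-- monotone of psi on [0,k] -/
lemma mono_psi (k : ℕ) (hk : 1 ≤ k) : MonotoneOn (psi k) (Icc 0 (k:ℝ)) := by
  have h := mono_psi_add k hk 0
  simp only [zero_mul, add_zero] at h
  simpa using h

/-- the Vc monotonicity in usable form:
    psi x - psi y ≤ (z - k) * (Hcl y - Hcl x) for 0 ≤ x ≤ y ≤ z, k ≤ z -/
lemma V_ineq (k : ℕ) (hk : 1 ≤ k) (z x y : ℝ) (hzk : (k:ℝ) ≤ z)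
    (hx : 0 ≤ x) (hxy : x ≤ y) (hyz : y ≤ z) :
    psi k x - psi k y ≤ (z - (k:ℝ)) * (Hcl k y - Hcl k x) := by
  have h := mono_psi_add k hk (z - (k:ℝ))
  have hz' : (k:ℝ) + (z - (k:ℝ)) = z := by ring
  rw [hz'] at h
  have hxm : x ∈ Icc (0:ℝ) z := ⟨hx, hxy.trans hyz⟩
  have hym : y ∈ Icc (0:ℝ) z := ⟨hx.trans hxy, hyz⟩
  have := h hxm hym hxy
  simp only at this
  nlinarith [this]

/-- Core estimate. -/
lemma core_est (k : ℕ) (hk : 1 ≤ k) (z a : ℝ) (hzk : (k:ℝ) ≤ z)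
    (hza : Hcl k z = 1 - a) (x y : ℝ) (hx : 0 ≤ x) (hxy : x ≤ y)
    (hH : Hcl k y - Hcl k x ≤ a) :
    psi k x - psi k y ≤ psi k z + (k:ℝ) * a := by
  have hk0 : (0:ℝ) < (k:ℝ) := by exact_mod_cast hk
  have hz0 : 0 ≤ z := by linarith
  have hy0 : 0 ≤ y := hx.trans hxy
  have ha0 : 0 ≤ a := by
    have := Hcl_lt_one k hk z hz0
    linarith
  have hpsiz : 0 ≤ psi k z := psi_nonneg k z hz0
  rcases le_or_gt y (k:ℝ) with hyk | hyk
  · -- y ≤ k : psi x ≤ psi y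
    have := mono_psi k hk ⟨hx, hxy.trans hyk⟩ ⟨hy0, hyk⟩ hxy
    nlinarith
  · -- k < y
    set x' := max x (k:ℝ) with hx'def
    have hx'0 : 0 ≤ x' := le_trans hx (le_max_left _ _)
    have hkx' : (k:ℝ) ≤ x' := le_max_right _ _
    have hx'y : x' ≤ y := max_le hxy hyk.le
    have hpx : psi k x ≤ psi k x' := by
      rcases le_or_gt x (k:ℝ) with h | h
      · have : x' = (k:ℝ) := max_eq_right h
        rw [this]
        exact mono_psi k hk ⟨hx, h⟩ ⟨hk0.le, le_refl _⟩ h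
      · have : x' = x := max_eq_left h.le
        rw [this]
    have hHx : Hcl k x ≤ Hcl k x' := by
      rcases le_or_gt x (k:ℝ) with h | h
      · exact (strictMono_Hcl k hk).monotoneOn (mem_Ici.2 hx) (mem_Ici.2 hx'0)
          (le_max_left _ _)
      · have : x' = x := max_eq_left h.le
        rw [this]
    have hH' : Hcl k y - Hcl k x' ≤ a := by linarith
    -- now work with x'
    have main : psi k x' - psi k y ≤ psi k z + (k:ℝ) * a := by
      rcases le_or_gt z x' with hzx | hzx
      · -- x' ≥ z: psi x' ≤ psi z
        have h1 : psi k x' ≤ psi k z := anti_psi k hk (mem_Ici.2 hzk) (mem_Ici.2 (hzk.trans hzx)) hzx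
        have h2 : 0 ≤ psi k y := psi_nonneg k y hy0
        nlinarith
      · rcases le_or_gt y z with hyz | hyz
        · -- y ≤ z
          have h1 := V_ineq k hk z x' y hzk hx'0 hx'y hyz
          have h2 : (z - (k:ℝ)) * (Hcl k y - Hcl k x') ≤ (z - (k:ℝ)) * a :=
            mul_le_mul_of_nonneg_left hH' (by linarith)
          have h3 : (z - (k:ℝ)) * a = (z - (k:ℝ)) * (1 - Hcl k z) := by rw [hza]; ring
          have h4 := tail_ineq k hk z hz0
          nlinarith
        · -- z < y
          have h1 := V_ineq k hk z x' z hzk hx'0 hzx.le (le_refl z)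
          have hHzy : Hcl k z ≤ Hcl k y := (strictMono_Hcl k hk).monotoneOn
            (mem_Ici.2 hz0) (mem_Ici.2 hy0) hyz.le
          -- Hcl z - Hcl x' ≤ a - (Hcl y - Hcl z) = 1 - Hcl y
          have h2 : Hcl k z - Hcl k x' ≤ 1 - Hcl k y := by linarith
          have h3 : (z - (k:ℝ)) * (Hcl k z - Hcl k x') ≤ (z - (k:ℝ)) * (1 - Hcl k y) :=
            mul_le_mul_of_nonneg_left h2 (by linarith)
          have h4 : (z - (k:ℝ)) * (1 - Hcl k y) ≤ (y - (k:ℝ)) * (1 - Hcl k y) := by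
            have hHy1 : 0 ≤ 1 - Hcl k y := by
              have := Hcl_lt_one k hk y hy0
              linarith
            nlinarith
          have h5 := tail_ineq k hk y hy0
          have hka : 0 ≤ (k:ℝ) * a := mul_nonneg hk0.le ha0
          linarith [h1, h3, h4, h5]
    linarith

lemma Hcl_zero (k : ℕ) (hk : 1 ≤ k) : Hcl k 0 = 0 := by
  unfold Hcl Sexp
  obtain ⟨m, rfl⟩ := Nat.exists_eq_succ_of_ne_zero (by omega : k ≠ 0)
  rw [Finset.sum_range_succ']
  simp

/-- representation of φ(s) for s in [0,1) -/
lemma phi_rep (k : ℕ) (hk : 1 ≤ k) (Hinv : ℝ → ℝ)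
  (hinv : ∀ s ∈ Set.Ioo (0:ℝ) 1, Hgamma k (Hinv s) = s ∧ 0 < Hinv s)
  (hinv0 : Hinv 0 = 0) (s : ℝ) (hs0 : 0 ≤ s) (hs1 : s < 1) :
    ∃ x : ℝ, 0 ≤ x ∧ Hcl k x = s ∧ Hpdf k (Hinv s) * Hinv s = psi k x := by
  rcases eq_or_lt_of_le hs0 with h0 | h0
  · refine ⟨0, le_refl _, by rw [← h0]; exact Hcl_zero k hk, ?_⟩
    rw [← h0, hinv0, psi_zero k hk, mul_zero]
  · obtain ⟨hH, hx⟩ := hinv s ⟨h0, hs1⟩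
    refine ⟨Hinv s, hx.le, ?_, ?_⟩
    · rw [← Hgamma_eq k hk, hH]
    · rw [psi_eq k hk]

lemma point_bound (k : ℕ) (hk : 1 ≤ k) (Hinv : ℝ → ℝ)
  (hinv : ∀ s ∈ Set.Ioo (0:ℝ) 1, Hgamma k (Hinv s) = s ∧ 0 < Hinv s)
  (hinv0 : Hinv 0 = 0) (hext1 : Hpdf k (Hinv 1) * Hinv 1 = 0) (a : ℝ) (ha : 0 < a) (ha2 : a ≤ 1/2)
    (hak : a ≤ 1 - Hcl k (k:ℝ)) (h s : ℝ)
    (hh0 : 0 ≤ h) (hha : h ≤ a) (hs0 : 0 ≤ s) (hs1 : s ≤ 1 - h) :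
    |Hpdf k (Hinv (s + h)) * Hinv (s + h) - Hpdf k (Hinv s) * Hinv s|
      ≤ psi k (Hinv (1 - a)) + (k:ℝ) * a := by
  have hk0 : (0:ℝ) < (k:ℝ) := by exact_mod_cast hk
  have hka : 0 ≤ (k:ℝ) * a := mul_nonneg hk0.le ha.le
  -- the reference point z
  have h1a : (1:ℝ) - a ∈ Set.Ioo (0:ℝ) 1 := ⟨by linarith, by linarith⟩
  obtain ⟨hHz, hz0⟩ := hinv (1-a) h1a
  set z := Hinv (1-a) with hzdef
  have hHclz : Hcl k z = 1 - a := by rw [← Hgamma_eq k hk, hHz]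
  have hzk : (k:ℝ) ≤ z := by
    have hmono := strictMono_Hcl k hk
    have hkmem : (k:ℝ) ∈ Ici (0:ℝ) := mem_Ici.2 hk0.le
    have hzmem : z ∈ Ici (0:ℝ) := mem_Ici.2 hz0.le
    rw [← hmono.le_iff_le hkmem hzmem, hHclz]
    linarith
  have hpsiz : 0 ≤ psi k z := psi_nonneg k z hz0.le
  have hsh1 : s + h ≤ 1 := by linarith
  rcases eq_or_lt_of_le hsh1 with hE | hE
  · -- s + h = 1
    rcases eq_or_lt_of_le hh0 with hh0' | hh0'
    · -- h = 0, s = 1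
      rw [← hh0', add_zero, sub_self, abs_zero]
      linarith
    · -- h > 0
      have hsI : s ∈ Set.Ioo (0:ℝ) 1 := ⟨by linarith, by linarith⟩
      obtain ⟨hHx, hx0⟩ := hinv s hsI
      have hHclx : Hcl k (Hinv s) = s := by rw [← Hgamma_eq k hk, hHx]
      rw [hE, hext1, zero_sub, abs_neg, ← psi_eq k hk, abs_of_nonneg (psi_nonneg k _ hx0.le)]
      have hxz : z ≤ Hinv s := by
        have hmono := strictMono_Hcl k hk
        rw [← hmono.le_iff_le (mem_Ici.2 hz0.le) (mem_Ici.2 hx0.le), hHclz, hHclx]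
        linarith
      have := anti_psi k hk (mem_Ici.2 hzk) (mem_Ici.2 (hzk.trans hxz)) hxz
      linarith
  · -- s + h < 1
    obtain ⟨x, hx0, hHclx, hrepx⟩ := phi_rep k hk Hinv hinv hinv0 s hs0 (by linarith)
    obtain ⟨y, hy0, hHcly, hrepy⟩ := phi_rep k hk Hinv hinv hinv0 (s+h)
      (by linarith) hE
    rw [hrepx, hrepy]
    have hxy : x ≤ y := by
      have hmono := strictMono_Hcl k hk
      rw [← hmono.le_iff_le (mem_Ici.2 hx0) (mem_Ici.2 hy0), hHclx, hHcly]
      linarith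
    rw [abs_le]
    constructor
    · -- psi x - psi y ≤ psi z + k a, i.e. -(psi z + ka) ≤ psi y - psi x
      have := core_est k hk z a hzk hHclz x y hx0 hxy (by rw [hHclx, hHcly]; linarith)
      linarith
    · have h1 := psi_diff_le k hk x y hx0 hxy
      rw [hHclx, hHcly] at h1
      have h2 : psi k y - psi k x ≤ (k:ℝ) * h := by linarith
      nlinarith

lemma Sexp_div_tendsto (k : ℕ) (hk : 1 ≤ k) :
    Tendsto (fun x : ℝ => Sexp k x / x ^ (k-1)) atTop (𝓝 (1 / (Nat.factorial (k-1) : ℝ))) := by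
  have hsum : ∀ x : ℝ, Sexp k x / x ^ (k-1)
      = ∑ j ∈ Finset.range k, (x ^ j / (Nat.factorial j : ℝ)) / x ^ (k-1) := by
    intro x; rw [Sexp, Finset.sum_div]
  simp only [hsum]
  have hlim : (1 : ℝ) / (Nat.factorial (k-1) : ℝ)
      = ∑ j ∈ Finset.range k, (if j = k-1 then (1 : ℝ) / (Nat.factorial (k-1) : ℝ) else 0) := by
    rw [Finset.sum_ite_eq' (Finset.range k) (k-1)]
    simp only [Finset.mem_range]
    rw [if_pos (by omega)]
  rw [hlim]
  apply tendsto_finset_sum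
  intro j hj
  rcases eq_or_ne j (k-1) with hjk | hjk
  · subst hjk
    rw [if_pos rfl]
    have : ∀ᶠ x : ℝ in atTop, (x ^ (k-1) / (Nat.factorial (k-1) : ℝ)) / x ^ (k-1)
        = 1 / (Nat.factorial (k-1) : ℝ) := by
      filter_upwards [eventually_gt_atTop (0:ℝ)] with x hx
      have : x ^ (k-1) ≠ 0 := pow_ne_zero _ hx.ne'
      field_simp
    exact Tendsto.congr' (this.mono fun x hx => hx.symm) tendsto_const_nhds
  · rw [if_neg hjk]
    have hjlt : j < k - 1 := by
      rw [Finset.mem_range] at hj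
      omega
    have h0 := tendsto_pow_div_pow_atTop_zero (𝕜 := ℝ) hjlt
    have heq : ∀ x : ℝ, (x ^ j / (Nat.factorial j : ℝ)) / x ^ (k-1)
        = (1 / (Nat.factorial j : ℝ)) * (x ^ j / x ^ (k-1)) := by
      intro x; ring
    simp only [heq]
    have := h0.const_mul (1 / (Nat.factorial j : ℝ))
    simpa using this

lemma T1 (k : ℕ) (hk : 1 ≤ k) :
    Tendsto (fun x : ℝ => x ^ (k-1) / ((Nat.factorial (k-1) : ℝ) * Sexp k x)) atTop (𝓝 1) := by
  have hfac : (0:ℝ) < (Nat.factorial (k-1) : ℝ) := by exact_mod_cast Nat.factorial_pos _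
  have h1 : Tendsto (fun x : ℝ => (Nat.factorial (k-1) : ℝ) * Sexp k x / x ^ (k-1)) atTop
      (𝓝 1) := by
    have h := (Sexp_div_tendsto k hk).const_mul (Nat.factorial (k-1) : ℝ)
    have : (Nat.factorial (k-1) : ℝ) * (1 / (Nat.factorial (k-1) : ℝ)) = 1 := by
      field_simp
    rw [this] at h
    apply h.congr
    intro x
    ring
  have h2 := h1.inv₀ (by norm_num)
  have heq : ∀ x : ℝ, ((Nat.factorial (k-1) : ℝ) * Sexp k x / x ^ (k-1))⁻¹
      = x ^ (k-1) / ((Nat.factorial (k-1) : ℝ) * Sexp k x) := by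
    intro x
    rw [inv_div]
  simp only [heq] at h2
  simpa using h2

lemma Sexp_ge_one (k : ℕ) (hk : 1 ≤ k) (x : ℝ) (hx : 0 ≤ x) : 1 ≤ Sexp k x := by
  unfold Sexp
  obtain ⟨m, rfl⟩ := Nat.exists_eq_succ_of_ne_zero (by omega : k ≠ 0)
  rw [Finset.sum_range_succ']
  have : ∀ i ∈ Finset.range m, (0:ℝ) ≤ x ^ (i+1) / (Nat.factorial (i+1) : ℝ) := by
    intro i _; positivity
  have hs := Finset.sum_nonneg this
  simp only [pow_zero, Nat.factorial_zero, Nat.cast_one, div_one]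
  linarith

lemma logS_div_tendsto (k : ℕ) (hk : 1 ≤ k) :
    Tendsto (fun x : ℝ => Real.log (Sexp k x) / x) atTop (𝓝 0) := by
  have hlogid : Tendsto (fun x : ℝ => Real.log x / x) atTop (𝓝 0) :=
    Real.isLittleO_log_id_atTop.tendsto_div_nhds_zero
  have hup : Tendsto (fun x : ℝ => (Real.log (k:ℝ) + ((k:ℝ)-1) * Real.log x) / x) atTop (𝓝 0) := by
    have hc : Tendsto (fun x : ℝ => Real.log (k:ℝ) / x) atTop (𝓝 0) :=
      tendsto_const_nhds.div_atTop tendsto_id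
    have hl : Tendsto (fun x : ℝ => ((k:ℝ)-1) * (Real.log x / x)) atTop (𝓝 0) := by
      have := hlogid.const_mul ((k:ℝ)-1)
      simpa using this
    have := hc.add hl
    rw [add_zero] at this
    apply this.congr
    intro x
    ring
  apply tendsto_of_tendsto_of_tendsto_of_le_of_le' (tendsto_const_nhds (α := ℝ)) hup
  · filter_upwards [eventually_ge_atTop (1:ℝ)] with x hx
    have h1 : 1 ≤ Sexp k x := Sexp_ge_one k hk x (by linarith)
    have := Real.log_nonneg h1
    positivity
  · filter_upwards [eventually_ge_atTop (1:ℝ)] with x hx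
    have hx0 : (0:ℝ) < x := by linarith
    -- Sexp k x ≤ k * x^(k-1)
    have hS : Sexp k x ≤ (k:ℝ) * x ^ (k-1) := by
      unfold Sexp
      calc ∑ j ∈ Finset.range k, x ^ j / (Nat.factorial j : ℝ)
          ≤ ∑ _j ∈ Finset.range k, x ^ (k-1) := by
            apply Finset.sum_le_sum
            intro j hj
            rw [Finset.mem_range] at hj
            have hfj : (1:ℝ) ≤ (Nat.factorial j : ℝ) := by
              exact_mod_cast Nat.one_le_iff_ne_zero.2 (Nat.factorial_ne_zero j)
            have hxp : x ^ j ≤ x ^ (k-1) := pow_le_pow_right₀ hx (by omega)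
            have hxpnn : (0:ℝ) ≤ x ^ j := by positivity
            calc x ^ j / (Nat.factorial j : ℝ) ≤ x ^ j / 1 := by
                  apply div_le_div_of_nonneg_left hxpnn <;> linarith
              _ = x ^ j := div_one _
              _ ≤ x ^ (k-1) := hxp
        _ = (k:ℝ) * x ^ (k-1) := by
            rw [Finset.sum_const, Finset.card_range, nsmul_eq_mul]
    have hSpos : 0 < Sexp k x := Sexp_pos k hk x hx0.le
    have hlogS : Real.log (Sexp k x) ≤ Real.log ((k:ℝ) * x ^ (k-1)) :=
      Real.log_le_log hSpos hS
    have hexp : Real.log ((k:ℝ) * x ^ (k-1)) = Real.log (k:ℝ) + ((k:ℝ)-1) * Real.log x := by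
      have hk0 : (0:ℝ) < (k:ℝ) := by exact_mod_cast hk
      rw [Real.log_mul hk0.ne' (by positivity), Real.log_pow]
      have : ((k-1 : ℕ) : ℝ) = (k:ℝ) - 1 := by
        have : (1:ℝ) ≤ (k:ℝ) := by exact_mod_cast hk
        push_cast [Nat.cast_sub hk]
        ring
      rw [this]
    have hfin := hlogS.trans_eq hexp
    gcongr

lemma T2 (k : ℕ) (hk : 1 ≤ k) :
    Tendsto (fun x : ℝ => x / (x - Real.log (Sexp k x))) atTop (𝓝 1) := by
  have h1 : Tendsto (fun x : ℝ => 1 - Real.log (Sexp k x) / x) atTop (𝓝 1) := by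
    have := (logS_div_tendsto k hk).const_sub 1
    simpa using this
  have h2 := h1.inv₀ (by norm_num)
  rw [inv_one] at h2
  apply h2.congr'
  filter_upwards [eventually_gt_atTop (0:ℝ)] with x hx
  have h3 : 1 - Real.log (Sexp k x)/x = (x - Real.log (Sexp k x))/x := by
    field_simp
  rw [h3, inv_div]

noncomputable def Rfun (k : ℕ) (x : ℝ) : ℝ :=
  (x ^ (k-1) / ((Nat.factorial (k-1) : ℝ) * Sexp k x)) * (x / (x - Real.log (Sexp k x)))

lemma Rfun_tendsto (k : ℕ) (hk : 1 ≤ k) : Tendsto (Rfun k) atTop (𝓝 1) := by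
  have := (T1 k hk).mul (T2 k hk)
  rw [mul_one] at this
  exact this

lemma ratio_eq (k : ℕ) (hk : 1 ≤ k) (a z : ℝ) (ha : 0 < a) (ha1 : a < 1)
    (hz : 0 < z) (hH : Hcl k z = 1 - a) :
    psi k z / (a * Real.log (1/a)) = Rfun k z := by
  have hS : 0 < Sexp k z := Sexp_pos k hk z hz.le
  have haeq : a = Real.exp (-z) * Sexp k z := by
    have h := one_sub_Hcl k z
    rw [hH] at h
    linarith
  have hlog : Real.log (1/a) = z - Real.log (Sexp k z) := by
    rw [one_div, Real.log_inv, haeq, Real.log_mul (Real.exp_ne_zero _) hS.ne', Real.log_exp]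
    ring
  have hL : 0 < Real.log (1/a) := Real.log_pos (by rw [one_div]; exact (one_lt_inv₀ ha).2 ha1)
  have hzlog : 0 < z - Real.log (Sexp k z) := by rw [← hlog]; exact hL
  have hfac : (0:ℝ) < (Nat.factorial (k-1) : ℝ) := by exact_mod_cast Nat.factorial_pos _
  have hzk : z ^ k = z ^ (k-1) * z := by
    obtain ⟨m, rfl⟩ := Nat.exists_eq_succ_of_ne_zero (by omega : k ≠ 0)
    simp only [Nat.succ_sub_one]
    rw [pow_succ]
  unfold Rfun psi
  rw [hlog, haeq, hzk]
  have hexp : Real.exp (-z) ≠ 0 := Real.exp_ne_zero _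
  field_simp

lemma tendsto_Hinv (k : ℕ) (hk : 1 ≤ k) (Hinv : ℝ → ℝ)
    (hinv : ∀ s ∈ Set.Ioo (0:ℝ) 1, Hgamma k (Hinv s) = s ∧ 0 < Hinv s) :
    Tendsto (fun a => Hinv (1-a)) (𝓝[>] (0:ℝ)) atTop := by
  rw [tendsto_atTop]
  intro b
  set m := max b 0 with hmdef
  have hm0 : (0:ℝ) ≤ m := le_max_right _ _
  have hε : 0 < 1 - Hcl k m := by linarith [Hcl_lt_one k hk m hm0]
  have hmin : 0 < min (1 - Hcl k m) 1 := lt_min hε one_pos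
  filter_upwards [Ioo_mem_nhdsGT hmin] with a ha
  have ha0 : 0 < a := ha.1
  have ha1 : a < 1 := lt_of_lt_of_le ha.2 (min_le_right _ _)
  have haε : a < 1 - Hcl k m := lt_of_lt_of_le ha.2 (min_le_left _ _)
  have h1a : (1:ℝ) - a ∈ Set.Ioo (0:ℝ) 1 := ⟨by linarith, by linarith⟩
  obtain ⟨hH, hz⟩ := hinv (1-a) h1a
  have hHcl : Hcl k (Hinv (1-a)) = 1 - a := by rw [← Hgamma_eq k hk, hH]
  have hlt : Hcl k m < Hcl k (Hinv (1-a)) := by rw [hHcl]; linarith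
  have hmz : m < Hinv (1-a) := by
    by_contra hcon
    push_neg at hcon
    have := (strictMono_Hcl k hk).monotoneOn (mem_Ici.2 hz.le) (mem_Ici.2 hm0) hcon
    linarith
  exact le_trans (le_max_left b 0) hmz.le

lemma sup_bounds (k : ℕ) (hk : 1 ≤ k) (Hinv : ℝ → ℝ)
    (hinv : ∀ s ∈ Set.Ioo (0:ℝ) 1, Hgamma k (Hinv s) = s ∧ 0 < Hinv s)
    (hinv0 : Hinv 0 = 0) (hext1 : Hpdf k (Hinv 1) * Hinv 1 = 0)
    (a : ℝ) (ha : 0 < a) (ha2 : a ≤ 1/2) (hak : a ≤ 1 - Hcl k (k:ℝ)) :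
    psi k (Hinv (1-a)) ≤ sSup ((fun p : ℝ × ℝ =>
        |Hpdf k (Hinv (p.2 + p.1)) * Hinv (p.2 + p.1)
          - Hpdf k (Hinv p.2) * Hinv p.2|) ''
      {p : ℝ × ℝ | 0 ≤ p.1 ∧ p.1 ≤ a ∧ 0 ≤ p.2 ∧ p.2 ≤ 1 - p.1})
    ∧ sSup ((fun p : ℝ × ℝ =>
        |Hpdf k (Hinv (p.2 + p.1)) * Hinv (p.2 + p.1)
          - Hpdf k (Hinv p.2) * Hinv p.2|) ''
      {p : ℝ × ℝ | 0 ≤ p.1 ∧ p.1 ≤ a ∧ 0 ≤ p.2 ∧ p.2 ≤ 1 - p.1})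
      ≤ psi k (Hinv (1-a)) + (k:ℝ) * a := by
  set f : ℝ × ℝ → ℝ := fun p =>
    |Hpdf k (Hinv (p.2 + p.1)) * Hinv (p.2 + p.1) - Hpdf k (Hinv p.2) * Hinv p.2| with hfdef
  set T : Set (ℝ × ℝ) := {p : ℝ × ℝ | 0 ≤ p.1 ∧ p.1 ≤ a ∧ 0 ≤ p.2 ∧ p.2 ≤ 1 - p.1} with hTdef
  have hbd : ∀ v ∈ f '' T, v ≤ psi k (Hinv (1-a)) + (k:ℝ) * a := by
    rintro v ⟨p, hp, rfl⟩
    exact point_bound k hk Hinv hinv hinv0 hext1 a ha ha2 hak p.1 p.2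
      hp.1 hp.2.1 hp.2.2.1 hp.2.2.2
  have hbdd : BddAbove (f '' T) := ⟨psi k (Hinv (1-a)) + (k:ℝ) * a, hbd⟩
  -- the witness point (a, 1-a)
  have hmem : psi k (Hinv (1-a)) ∈ f '' T := by
    refine ⟨(a, 1-a), ⟨ha.le, le_refl a, by norm_num; linarith, by norm_num⟩, ?_⟩
    simp only [hfdef]
    have h1 : (1:ℝ) - a + a = 1 := by ring
    rw [h1, hext1, zero_sub, abs_neg]
    have h1a : (1:ℝ) - a ∈ Set.Ioo (0:ℝ) 1 := ⟨by linarith, by linarith⟩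
    obtain ⟨hH, hz⟩ := hinv (1-a) h1a
    rw [← psi_eq k hk, abs_of_nonneg (psi_nonneg k _ hz.le)]
  constructor
  · exact le_csSup hbdd hmem
  · exact csSup_le ⟨_, hmem⟩ hbd

lemma tendsto_loginv : Tendsto (fun a : ℝ => Real.log (1/a)) (𝓝[>] (0:ℝ)) atTop := by
  have h1 : Tendsto (fun a : ℝ => a⁻¹) (𝓝[>] (0:ℝ)) atTop := tendsto_inv_nhdsGT_zero
  have := Real.tendsto_log_atTop.comp h1
  apply this.congr
  intro a
  simp [one_div]

theorem stmt15 (k : ℕ) (hk : 1 ≤ k) (Hinv : ℝ → ℝ)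
    (hinv : ∀ s ∈ Set.Ioo (0:ℝ) 1, Hgamma k (Hinv s) = s ∧ 0 < Hinv s)
    (hinv0 : Hinv 0 = 0) (hext1 : Hpdf k (Hinv 1) * Hinv 1 = 0) :
    Filter.Tendsto
      (fun a =>
        sSup ((fun p : ℝ × ℝ =>
            |Hpdf k (Hinv (p.2 + p.1)) * Hinv (p.2 + p.1)
              - Hpdf k (Hinv p.2) * Hinv p.2|) ''
          {p : ℝ × ℝ | 0 ≤ p.1 ∧ p.1 ≤ a ∧ 0 ≤ p.2 ∧ p.2 ≤ 1 - p.1})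
          / (a * Real.log (1 / a)))
      (nhdsWithin 0 (Set.Ioi 0)) (nhds 1) := by
  have hk0 : (0:ℝ) < (k:ℝ) := by exact_mod_cast hk
  have hHk1 : Hcl k (k:ℝ) < 1 := Hcl_lt_one k hk _ hk0.le
  set a₀ : ℝ := min (1/2) (1 - Hcl k (k:ℝ)) with ha₀def
  have ha₀ : 0 < a₀ := lt_min (by norm_num) (by linarith)
  -- the comparison function g
  set g : ℝ → ℝ := fun a => psi k (Hinv (1-a)) / (a * Real.log (1/a)) with hgdef
  have hg : Tendsto g (𝓝[>] (0:ℝ)) (𝓝 1) := by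
    have hcomp := tendsto_Hinv k hk Hinv hinv
    have hR := (Rfun_tendsto k hk).comp hcomp
    apply hR.congr'
    filter_upwards [Ioo_mem_nhdsGT (one_pos : (0:ℝ) < 1)] with a ha
    have h1a : (1:ℝ) - a ∈ Set.Ioo (0:ℝ) 1 := ⟨by linarith [ha.2], by linarith [ha.1]⟩
    obtain ⟨hH, hz⟩ := hinv (1-a) h1a
    have hHcl : Hcl k (Hinv (1-a)) = 1 - a := by rw [← Hgamma_eq k hk, hH]
    exact (ratio_eq k hk a (Hinv (1-a)) ha.1 ha.2 hz hHcl).symm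
  have hk' : Tendsto (fun a : ℝ => (k:ℝ) / Real.log (1/a)) (𝓝[>] (0:ℝ)) (𝓝 0) :=
    Tendsto.div_atTop tendsto_const_nhds tendsto_loginv
  have hupper : Tendsto (fun a : ℝ => g a + (k:ℝ) / Real.log (1/a)) (𝓝[>] (0:ℝ)) (𝓝 1) := by
    have := hg.add hk'
    rw [add_zero] at this
    exact this
  apply tendsto_of_tendsto_of_tendsto_of_le_of_le' hg hupper
  · -- g a ≤ F a eventually
    filter_upwards [Ioo_mem_nhdsGT ha₀] with a ha
    have ha1 : 0 < a := ha.1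
    have ha2 : a ≤ 1/2 := le_trans ha.2.le (min_le_left _ _)
    have hak : a ≤ 1 - Hcl k (k:ℝ) := le_trans ha.2.le (min_le_right _ _)
    have hL : 0 < Real.log (1/a) := Real.log_pos (by rw [one_div]; rw [lt_inv_comm₀] <;> linarith)
    have haL : 0 < a * Real.log (1/a) := mul_pos ha1 hL
    obtain ⟨hlow, _⟩ := sup_bounds k hk Hinv hinv hinv0 hext1 a ha1 ha2 hak
    simp only [hgdef]
    gcongr
  · -- F a ≤ g a + k / L eventually
    filter_upwards [Ioo_mem_nhdsGT ha₀] with a ha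
    have ha1 : 0 < a := ha.1
    have ha2 : a ≤ 1/2 := le_trans ha.2.le (min_le_left _ _)
    have hak : a ≤ 1 - Hcl k (k:ℝ) := le_trans ha.2.le (min_le_right _ _)
    have hL : 0 < Real.log (1/a) := Real.log_pos (by rw [one_div]; rw [lt_inv_comm₀] <;> linarith)
    have haL : 0 < a * Real.log (1/a) := mul_pos ha1 hL
    obtain ⟨_, hup⟩ := sup_bounds k hk Hinv hinv hinv0 hext1 a ha1 ha2 hak
    have hsplit : (psi k (Hinv (1-a)) + (k:ℝ) * a) / (a * Real.log (1/a))
        = g a + (k:ℝ) / Real.log (1/a) := by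
      simp only [hgdef]
      field_simp
    calc sSup _ / (a * Real.log (1/a))
        ≤ (psi k (Hinv (1-a)) + (k:ℝ) * a) / (a * Real.log (1/a)) := by gcongr
      _ = g a + (k:ℝ) / Real.log (1/a) := hsplit
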